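/- For the makespan computed via the earliestTime recursion, the makespan of any crane-to-bay assignment is at least ⌈(∑_{i=0}^{n-1} p_i) / m⌉, where m is the number of cranes. -/

import Mathlib

/-- One column of the earliestTime recursion: given the previous column `prev`,
the crane `σb` assigned to the current bay and its processing time `pb`,
compute the value for crane `k` (cranes are processed from `m-1` down to `0`,
and crane `k` waits for crane `k+1`). -/
def etColStep (m σb pb : ℕ) (prev : ℕ → ℕ) (k : ℕ) : ℕ :=
  if _h : k + 1 < m then
    max (prev k + (if σb = k then pb else 0)) (etColStep m σb pb prev (k + 1))
  else
    prev k + (if σb = k then pb else 0)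
termination_by m - k
decreasing_by omega

/-- The column of earliestTime values for bay `b` (Algorithm 1). -/
def etCol (m : ℕ) (σ p : ℕ → ℕ) : ℕ → ℕ → ℕ
  | 0 => etColStep m (σ 0) (p 0) (fun _ => 0)
  | b + 1 => etColStep m (σ (b + 1)) (p (b + 1)) (etCol m σ p b)

/-- `earliestTime m σ p k b` : the earliest time crane `k` can move past
bay `b`, as computed by the dynamic programming recursion of Algorithm 1. -/
def earliestTime (m : ℕ) (σ p : ℕ → ℕ) (k b : ℕ) : ℕ :=
  etCol m σ p b k

lemma etColStep_ge (m σb pb : ℕ) (prev : ℕ → ℕ) (k j : ℕ) (hkj : k ≤ j) (hj : j < m) :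
    prev j + (if σb = j then pb else 0) ≤ etColStep m σb pb prev k := by
  by_cases hk : k + 1 < m
  · rw [etColStep, dif_pos hk]
    rcases eq_or_lt_of_le hkj with rfl | h
    · exact le_max_left _ _
    · exact le_trans (etColStep_ge m σb pb prev (k + 1) j h hj) (le_max_right _ _)
  · have hkj' : k = j := by omega
    subst hkj'
    rw [etColStep, dif_neg hk]
termination_by m - k
decreasing_by omega

lemma etColStep_mono (m σb pb : ℕ) (prev : ℕ → ℕ) (k j : ℕ) (hkj : k ≤ j) (hj : j < m) :
    etColStep m σb pb prev j ≤ etColStep m σb pb prev k := by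
  rcases eq_or_lt_of_le hkj with rfl | h
  · exact le_rfl
  · conv_rhs => rw [etColStep]
    rw [dif_pos (by omega : k + 1 < m)]
    exact le_trans (etColStep_mono m σb pb prev (k + 1) j h hj) (le_max_right _ _)
termination_by j - k
decreasing_by omega

lemma etCol_mono (m : ℕ) (σ p : ℕ → ℕ) (b k j : ℕ) (hkj : k ≤ j) (hj : j < m) :
    etCol m σ p b j ≤ etCol m σ p b k := by
  cases b with
  | zero => exact etColStep_mono m (σ 0) (p 0) _ k j hkj hj
  | succ b => exact etColStep_mono m (σ (b + 1)) (p (b + 1)) _ k j hkj hj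

/-- The makespan of any crane-to-bay assignment is at least the average load
`⌈(∑ p_i) / m⌉`. -/
theorem makespan_ge_average_load (m n : ℕ) (σ p : ℕ → ℕ)
    (hm : 1 ≤ m) (hn : 1 ≤ n) (hσ : ∀ i, σ i < m) :
    ⌈(∑ i ∈ Finset.range n, (p i : ℚ)) / (m : ℚ)⌉ ≤
      (earliestTime m σ p 0 (n - 1) : ℤ) := by
  have hload : ∀ j, j < m → ∀ b,
      (∑ i ∈ Finset.range (b + 1), if σ i = j then p i else 0) ≤ etCol m σ p b j := by
    intro j hj b
    induction b with
    | zero =>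
      simpa [etCol] using etColStep_ge m (σ 0) (p 0) (fun _ => 0) j j le_rfl hj
    | succ b ih =>
      rw [Finset.sum_range_succ]
      calc (∑ i ∈ Finset.range (b + 1), if σ i = j then p i else 0)
            + (if σ (b + 1) = j then p (b + 1) else 0)
          ≤ etCol m σ p b j + (if σ (b + 1) = j then p (b + 1) else 0) := by
            exact Nat.add_le_add_right ih _
        _ ≤ etCol m σ p (b + 1) j := etColStep_ge m _ _ _ j j le_rfl hj
  have hET : ∀ j, j < m →
      (∑ i ∈ Finset.range n, if σ i = j then p i else 0) ≤ earliestTime m σ p 0 (n - 1) := by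
    intro j hj
    have h0 : etCol m σ p (n - 1) j ≤ etCol m σ p (n - 1) 0 :=
      etCol_mono m σ p (n-1) 0 j (Nat.zero_le j) hj
    have := hload j hj (n - 1)
    have hn1 : n - 1 + 1 = n := Nat.succ_pred_eq_of_pos hn
    rw [hn1] at this
    exact le_trans this h0
  have hsum : (∑ i ∈ Finset.range n, p i) ≤ m * earliestTime m σ p 0 (n - 1) := by
    have : (∑ i ∈ Finset.range n, p i)
        = ∑ j ∈ Finset.range m, ∑ i ∈ Finset.range n, if σ i = j then p i else 0 := by
      rw [Finset.sum_comm]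
      refine Finset.sum_congr rfl fun i _ => ?_
      rw [Finset.sum_ite_eq (Finset.range m) (σ i) (fun _ => p i)]
      simp [Finset.mem_range.mpr (hσ i)]
    rw [this]
    calc ∑ j ∈ Finset.range m, ∑ i ∈ Finset.range n, (if σ i = j then p i else 0)
        ≤ ∑ _j ∈ Finset.range m, earliestTime m σ p 0 (n - 1) :=
          Finset.sum_le_sum fun j hj => hET j (Finset.mem_range.mp hj)
      _ = m * earliestTime m σ p 0 (n - 1) := by
          rw [Finset.sum_const, Finset.card_range, smul_eq_mul]
  rw [Int.ceil_le]
  rw [div_le_iff₀ (by positivity : (0 : ℚ) < (m : ℚ))]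
  push_cast
  calc (∑ i ∈ Finset.range n, (p i : ℚ)) = ((∑ i ∈ Finset.range n, p i : ℕ) : ℚ) := by
        push_cast; ring
    _ ≤ ((m * earliestTime m σ p 0 (n - 1) : ℕ) : ℚ) := by exact_mod_cast hsum
    _ = (earliestTime m σ p 0 (n - 1) : ℚ) * m := by push_cast; ring
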